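/- Let P be a monic polynomial of degree n with all zeros on the unit circle, written P(z) = ∏(z - e^{it_j}) with 0 ≤ t_1 < ... < t_n < 2π and t_{n+1} = t_1 + 2π. Then min_{1≤j≤n} max_{t ∈ [t_j, t_{j+1}]} |P(e^{it})| ≤ 2. That is, there exists a closed arc between two consecutive zeros on which |P(e^{it})| ≤ 2 for the maximum over that arc. -/

import Mathlib

open Complex Real Set

open Complex in
private lemma exp_sub_exp' (a b : ℂ) : Complex.exp (a*I) - Complex.exp (b*I)
    = 2*I*Complex.exp (((a+b)/2)*I) * Complex.sin ((a-b)/2) := by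
  rw [Complex.sin]
  have e1 : Complex.exp (((a+b)/2)*I) * Complex.exp (-((a-b)/2) * I) = Complex.exp (b*I) := by
    rw [← Complex.exp_add]; ring_nf
  have e2 : Complex.exp (((a+b)/2)*I) * Complex.exp (((a-b)/2) * I) = Complex.exp (a*I) := by
    rw [← Complex.exp_add]; ring_nf
  linear_combination e1 - e2 + (Complex.exp (((a+b)/2)*I) * Complex.exp (((a-b)/2)*I)
    - Complex.exp (((a+b)/2)*I) * Complex.exp (-((a-b)/2)*I)) * Complex.I_mul_I

open Complex in
private lemma prod_formula (n : ℕ) (t : ℕ → ℝ) (s : ℝ) :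
    ∏ j ∈ Finset.Icc 1 n, (Complex.exp (s*I) - Complex.exp (t j * I))
    = (2*I)^n * Complex.exp ((((n*s + ∑ j ∈ Finset.Icc 1 n, t j)/2 : ℝ))*I)
      * ((∏ j ∈ Finset.Icc 1 n, Real.sin ((s - t j)/2) : ℝ) : ℂ) := by
  have key : ∀ j, Complex.exp ((s:ℂ)*I) - Complex.exp ((t j : ℂ) * I)
      = (2*I) * Complex.exp ((((s + t j)/2 : ℝ) : ℂ)*I) * ((Real.sin ((s - t j)/2) : ℝ) : ℂ) := by
    intro j
    rw [exp_sub_exp' (s:ℂ) (t j : ℂ)]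
    push_cast
    ring_nf
  have hr : ∑ j ∈ Finset.Icc 1 n, (s + t j)/2 = (n*s + ∑ j ∈ Finset.Icc 1 n, t j)/2 := by
    rw [← Finset.sum_div, Finset.sum_add_distrib, Finset.sum_const, Nat.card_Icc]
    norm_num [nsmul_eq_mul]
  have hsum : ∑ j ∈ Finset.Icc 1 n, ((((s + t j)/2 : ℝ)) : ℂ)*I
      = (((n*s + (∑ j ∈ Finset.Icc 1 n, t j))/2 : ℝ) : ℂ)*I := by
    rw [← Finset.sum_mul, ← Complex.ofReal_sum, hr]
  rw [Finset.prod_congr rfl (fun j _ => key j), Finset.prod_mul_distrib, Finset.prod_mul_distrib,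
    Finset.prod_const, ← Complex.exp_sum, ← Complex.ofReal_prod, hsum, Nat.card_Icc]
  norm_num

open Complex Real in
private lemma pow_formula (n : ℕ) (hn : 1 ≤ n) (T : ℝ) (s : ℝ) :
    Complex.exp (((n*s : ℝ) : ℂ)*I) - Complex.exp (((T + ((n:ℝ)-1)*π : ℝ) : ℂ)*I)
    = I^n * Complex.exp ((((n*s + T)/2 : ℝ) : ℂ)*I)
      * ((2 * Real.sin ((n*s - T - ((n:ℝ)-1)*π)/2) : ℝ) : ℂ) := by
  rw [exp_sub_exp']
  have hI : Complex.exp (((π/2 : ℝ) : ℂ)*I) = I := by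
    rw [Complex.exp_mul_I]
    push_cast
    rw [Complex.cos_pi_div_two, Complex.sin_pi_div_two]
    ring
  have hsplit : (((n*s : ℝ) : ℂ) + ((T + ((n:ℝ)-1)*π : ℝ) : ℂ))/2 * I
      = (((n*s + T)/2 : ℝ) : ℂ)*I + (n - 1 : ℕ) * (((π/2 : ℝ) : ℂ)*I) := by
    push_cast [Nat.cast_sub hn]
    ring
  rw [hsplit, Complex.exp_add, Complex.exp_nat_mul, hI]
  have hsin : ((((n*s : ℝ) : ℂ)) - ((T + ((n:ℝ)-1)*π : ℝ) : ℂ))/2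
      = (((n*s - T - ((n:ℝ)-1)*π)/2 : ℝ) : ℂ) := by push_cast; ring
  rw [hsin, ← Complex.ofReal_sin]
  have hpow : (I : ℂ)^n = I * I^(n-1) := by
    conv_lhs => rw [show n = (n-1) + 1 by omega]
    rw [pow_succ]; ring
  rw [hpow]
  push_cast
  ring


private lemma exists_zero_between {g : ℝ → ℝ} (hc : Continuous g) {a b : ℝ} (hab : a < b)
    (h : g a * g b < 0) : ∃ r ∈ Set.Ioo a b, g r = 0 := by
  rcases lt_trichotomy (g a) 0 with ha | ha | ha
  · have hb : 0 < g b := by nlinarith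
    have : (0:ℝ) ∈ Set.Ioo (g a) (g b) := ⟨ha, hb⟩
    obtain ⟨r, hr, hr0⟩ := intermediate_value_Ioo hab.le hc.continuousOn this
    exact ⟨r, hr, hr0⟩
  · rw [ha] at h; simp at h
  · have hb : g b < 0 := by nlinarith
    have : (0:ℝ) ∈ Set.Ioo (g b) (g a) := ⟨hb, ha⟩
    obtain ⟨r, hr, hr0⟩ := intermediate_value_Ioo' hab.le hc.continuousOn this
    exact ⟨r, hr, hr0⟩

/-- For a monic polynomial with all zeros on the unit circle, the minimum over arcs between
consecutive zeros of the maximum of `|P|` on that arc is at most `2`. -/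
theorem min_max_le_two (n : ℕ) (hn : 1 ≤ n) (t : ℕ → ℝ)
    (h0 : 0 ≤ t 1) (hmono : StrictMonoOn t (Set.Icc 1 n)) (hlast : t n < 2 * Real.pi)
    (hwrap : t (n + 1) = t 1 + 2 * Real.pi)
    (P : ℂ → ℂ)
    (hP : P = fun z => ∏ j ∈ Finset.Icc 1 n, (z - Complex.exp (t j * Complex.I))) :
    (Finset.Icc 1 n).inf' (Finset.nonempty_Icc.mpr hn)
      (fun j => sSup ((fun s : ℝ => ‖P (Complex.exp (s * Complex.I))‖) ''
        Set.Icc (t j) (t (j + 1)))) ≤ 2 := by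
  by_contra hcon
  push_neg at hcon
  rw [Finset.lt_inf'_iff] at hcon
  -- basic monotonicity facts about t
  have htmono : ∀ j k, 1 ≤ j → j ≤ k → k ≤ n → t j ≤ t k := by
    intro j k h1 h2 h3
    rcases eq_or_lt_of_le h2 with h | h
    · exact le_of_eq (by rw [h])
    · exact le_of_lt (hmono ⟨h1, le_trans h2 h3⟩ ⟨le_trans h1 h2, h3⟩ h)
  have ht1pos : ∀ k, 1 ≤ k → k ≤ n → 0 ≤ t k := fun k h1 h2 => le_trans h0 (htmono 1 k le_rfl h1 h2)
  have htlt2pi : ∀ k, 1 ≤ k → k ≤ n → t k < 2*π := fun k h1 h2 =>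
    lt_of_le_of_lt (htmono k n h1 h2 le_rfl) hlast
  have hnext : ∀ j, 1 ≤ j → j ≤ n → t j < t (j+1) := by
    intro j h1 h2
    rcases eq_or_lt_of_le h2 with h | h
    · subst h; rw [hwrap]
      calc t j < 2*π := hlast
        _ ≤ t 1 + 2*π := by linarith
    · exact hmono ⟨h1, h2⟩ ⟨le_trans h1 (Nat.le_succ j), h⟩ (Nat.lt_succ_self j)
  have hupper : ∀ j, 1 ≤ j → j ≤ n → t (j+1) ≤ t 1 + 2*π := by
    intro j h1 h2
    rcases eq_or_lt_of_le h2 with h | h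
    · subst h; rw [hwrap]
    · calc t (j+1) ≤ t n := htmono (j+1) n (le_trans h1 (Nat.le_succ j)) h le_rfl
        _ ≤ t 1 + 2*π := by linarith
  -- zeros of P at the t k
  have hPzero : ∀ k, 1 ≤ k → k ≤ n + 1 → P (Complex.exp (t k * Complex.I)) = 0 := by
    intro k h1 h2
    rcases Nat.lt_or_ge k (n+1) with h | h
    · rw [hP]
      exact Finset.prod_eq_zero (Finset.mem_Icc.mpr ⟨h1, Nat.lt_succ_iff.mp h⟩) (sub_self _)
    · have hk : k = n + 1 := le_antisymm h2 h
      subst hk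
      have : Complex.exp ((t (n+1) : ℂ) * Complex.I) = Complex.exp ((t 1 : ℂ) * Complex.I) := by
        rw [hwrap]
        push_cast
        rw [add_mul, Complex.exp_add]
        rw [show ((2:ℂ)*(π:ℂ))*Complex.I = 2*(π:ℂ)*Complex.I by ring, Complex.exp_two_pi_mul_I,
          mul_one]
      rw [this, hP]
      exact Finset.prod_eq_zero (Finset.mem_Icc.mpr ⟨le_rfl, hn⟩) (sub_self _)
  -- notation
  set T : ℝ := ∑ j ∈ Finset.Icc 1 n, t j with hT
  set f : ℝ → ℝ := fun s => ∏ j ∈ Finset.Icc 1 n, Real.sin ((s - t j)/2) with hf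
  set g : ℝ → ℝ := fun s => 2^n * f s - 2 * Real.sin ((n*s - T - ((n:ℝ)-1)*π)/2) with hg
  set w : ℂ := Complex.exp (((T + ((n:ℝ)-1)*π : ℝ) : ℂ)*Complex.I) with hw
  have hPf : ∀ s : ℝ, P (Complex.exp (s*Complex.I))
      = (2*Complex.I)^n * Complex.exp ((((n*s + T)/2 : ℝ) : ℂ)*Complex.I) * ((f s : ℝ) : ℂ) := by
    intro s
    rw [hP]
    exact prod_formula n t s
  have habs : ∀ s : ℝ, ‖P (Complex.exp (s*Complex.I))‖ = 2^n * |f s| := by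
    intro s
    rw [hPf s]
    rw [norm_mul, norm_mul, norm_pow, norm_mul, Complex.norm_I,
      Complex.norm_exp_ofReal_mul_I, Complex.norm_real, Real.norm_eq_abs]
    norm_num
  have hdiff : ∀ s : ℝ, P (Complex.exp (s*Complex.I))
      - (Complex.exp (((n*s : ℝ) : ℂ)*Complex.I) - w)
      = Complex.I^n * Complex.exp ((((n*s + T)/2 : ℝ) : ℂ)*Complex.I) * ((g s : ℝ) : ℂ) := by
    intro s
    rw [hPf s, hw, pow_formula n hn T s, hg]
    push_cast
    ring
  have hgzero : ∀ s : ℝ, g s = 0 →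
      P (Complex.exp (s*Complex.I)) = Complex.exp (((n*s : ℝ) : ℂ)*Complex.I) - w := by
    intro s hs
    have h2 := hdiff s
    rw [hs, Complex.ofReal_zero, mul_zero] at h2
    exact sub_eq_zero.mp h2
  -- extract points where |P| > 2
  have hexists : ∀ j : ℕ, ∃ x : ℝ, j ∈ Finset.Icc 1 n →
      (x ∈ Set.Icc (t j) (t (j+1)) ∧ 2 < ‖P (Complex.exp (x*Complex.I))‖) := by
    intro j
    by_cases hj : j ∈ Finset.Icc 1 n
    · obtain ⟨hj1, hj2⟩ := Finset.mem_Icc.mp hj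
      have hne : ((fun s : ℝ => ‖P (Complex.exp (s * Complex.I))‖) ''
          Set.Icc (t j) (t (j + 1))).Nonempty :=
        (Set.nonempty_Icc.mpr (le_of_lt (hnext j hj1 hj2))).image _
      obtain ⟨y, hy, h2y⟩ := exists_lt_of_lt_csSup hne (hcon j hj)
      obtain ⟨x, hx, hxy⟩ := hy
      refine ⟨x, fun _ => ⟨hx, ?_⟩⟩
      rw [← hxy] at h2y
      exact h2y
    · exact ⟨0, fun h => absurd h hj⟩
  choose s hs using hexists
  have hslb : ∀ j, 1 ≤ j → j ≤ n → t j < s j ∧ s j < t (j+1) := by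
    intro j h1 h2
    have hj : j ∈ Finset.Icc 1 n := Finset.mem_Icc.mpr ⟨h1, h2⟩
    obtain ⟨⟨hl, hr⟩, hgt⟩ := hs j hj
    constructor
    · rcases eq_or_lt_of_le hl with h | h
      · exfalso; rw [← h, hPzero j h1 (by omega), norm_zero] at hgt; linarith
      · exact h
    · rcases eq_or_lt_of_le hr with h | h
      · exfalso; rw [h, hPzero (j+1) (by omega) (by omega), norm_zero] at hgt; linarith
      · exact h
  -- sign of f at s j
  have hsign : ∀ j, 1 ≤ j → j ≤ n → 0 < (-1:ℝ)^(n-j) * f (s j) := by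
    intro j h1 h2
    obtain ⟨hl, hr⟩ := hslb j h1 h2
    have hsplit : Finset.Icc 1 n = Finset.Icc 1 j ∪ Finset.Ioc j n := by
      ext x
      simp only [Finset.mem_Icc, Finset.mem_Ioc, Finset.mem_union]
      omega
    have hdisj : Disjoint (Finset.Icc 1 j) (Finset.Ioc j n) := by
      simp only [Finset.disjoint_left, Finset.mem_Icc, Finset.mem_Ioc]
      omega
    have hfeq : f (s j) = (∏ k ∈ Finset.Icc 1 j, Real.sin ((s j - t k)/2))
        * ∏ k ∈ Finset.Ioc j n, Real.sin ((s j - t k)/2) := by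
      rw [hf]
      simp only []
      rw [hsplit, Finset.prod_union hdisj]
    have hA : 0 < ∏ k ∈ Finset.Icc 1 j, Real.sin ((s j - t k)/2) := by
      apply Finset.prod_pos
      intro k hk
      obtain ⟨hk1, hk2⟩ := Finset.mem_Icc.mp hk
      apply Real.sin_pos_of_pos_of_lt_pi
      · have : t k ≤ t j := htmono k j hk1 hk2 h2
        linarith
      · have hu := hupper j h1 h2
        have h1k : t 1 ≤ t k := htmono 1 k le_rfl hk1 (le_trans hk2 h2)
        linarith
    have hB : ∀ k ∈ Finset.Ioc j n, Real.sin ((s j - t k)/2) < 0 := by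
      intro k hk
      obtain ⟨hk1, hk2⟩ := Finset.mem_Ioc.mp hk
      apply Real.sin_neg_of_neg_of_neg_pi_lt
      · have : t (j+1) ≤ t k := htmono (j+1) k (by omega) hk1 hk2
        linarith
      · have h1' : 0 ≤ t j := ht1pos j h1 h2
        have h2' : t k < 2*π := htlt2pi k (by omega) hk2
        linarith
    have hcard : (Finset.Ioc j n).card = n - j := by simp
    have hBneg : ∏ k ∈ Finset.Ioc j n, Real.sin ((s j - t k)/2)
        = (-1:ℝ)^(n-j) * ∏ k ∈ Finset.Ioc j n, (-(Real.sin ((s j - t k)/2))) := by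
      rw [← hcard, ← Finset.prod_const, ← Finset.prod_mul_distrib]
      apply Finset.prod_congr rfl
      intro k _
      ring
    have hC : 0 < ∏ k ∈ Finset.Ioc j n, (-(Real.sin ((s j - t k)/2))) :=
      Finset.prod_pos (fun k hk => neg_pos.mpr (hB k hk))
    have hsq : ((-1:ℝ)^(n-j)) * ((-1:ℝ)^(n-j)) = 1 := by
      rw [← pow_add, ← two_mul, pow_mul, neg_one_sq, one_pow]
    calc (0:ℝ) < ((∏ k ∈ Finset.Icc 1 j, Real.sin ((s j - t k)/2))
          * ∏ k ∈ Finset.Ioc j n, (-(Real.sin ((s j - t k)/2)))) := mul_pos hA hC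
      _ = (-1:ℝ)^(n-j) * ((∏ k ∈ Finset.Icc 1 j, Real.sin ((s j - t k)/2))
          * ((-1:ℝ)^(n-j) * ∏ k ∈ Finset.Ioc j n, (-(Real.sin ((s j - t k)/2))))) := by
            rw [show ∀ a b c : ℝ, a * (b * (a * c)) = (a*a) * (b*c) from fun a b c => by ring,
              hsq, one_mul]
      _ = (-1:ℝ)^(n-j) * f (s j) := by rw [hfeq, hBneg]
  -- sign of g at s j
  have hgsign : ∀ j, 1 ≤ j → j ≤ n → 0 < (-1:ℝ)^(n-j) * g (s j) := by
    intro j h1 h2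
    have hsig := hsign j h1 h2
    have hfabs : (-1:ℝ)^(n-j) * f (s j) = |f (s j)| := by
      have habs2 := abs_of_pos hsig
      rw [_root_.abs_mul, _root_.abs_pow, _root_.abs_neg, _root_.abs_one, one_pow, one_mul] at habs2
      linarith
    have hgt := (hs j (Finset.mem_Icc.mpr ⟨h1, h2⟩)).2
    rw [habs (s j)] at hgt
    have hgs : g (s j) = 2^n * f (s j) - 2 * Real.sin ((n*(s j) - T - ((n:ℝ)-1)*π)/2) := by
      rw [hg]
    set u := Real.sin ((n*(s j) - T - ((n:ℝ)-1)*π)/2) with hu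
    have hsin1 : u ≤ 1 := Real.sin_le_one _
    have hsin2 : -1 ≤ u := Real.neg_one_le_sin _
    have hkey : (-1:ℝ)^(n-j) * g (s j)
        = 2^n * ((-1:ℝ)^(n-j) * f (s j)) - (-1:ℝ)^(n-j) * (2*u) := by rw [hgs]; ring
    rw [hkey, hfabs]
    rcases neg_one_pow_eq_or ℝ (n-j) with h | h <;> rw [h] <;> linarith
  -- monotonicity of s
  have hsmono : ∀ j k, 1 ≤ j → j < k → k ≤ n → s j < s k := by
    intro j k h1 h2 h3
    have ha := (hslb j h1 (by omega)).2
    have hb := htmono (j+1) k (by omega) h2 h3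
    have hc := (hslb k (by omega) h3).1
    linarith
  -- periodicity
  have hper : g (s 1 + 2*π) = (-1:ℝ)^n * g (s 1) := by
    have hfper : f (s 1 + 2*π) = (-1:ℝ)^n * f (s 1) := by
      rw [hf]
      simp only []
      have hcong : ∀ k ∈ Finset.Icc 1 n, Real.sin ((s 1 + 2*π - t k)/2)
          = (-1) * Real.sin ((s 1 - t k)/2) := by
        intro k _
        have harg : (s 1 + 2*π - t k)/2 = (s 1 - t k)/2 + π := by ring
        rw [harg, Real.sin_add_pi]
        ring
      rw [Finset.prod_congr rfl hcong, Finset.prod_mul_distrib, Finset.prod_const, Nat.card_Icc]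
      norm_num
    have hsper : Real.sin ((n*(s 1 + 2*π) - T - ((n:ℝ)-1)*π)/2)
        = (-1:ℝ)^n * Real.sin ((n*(s 1) - T - ((n:ℝ)-1)*π)/2) := by
      have harg : (n*(s 1 + 2*π) - T - ((n:ℝ)-1)*π)/2
          = (n*(s 1) - T - ((n:ℝ)-1)*π)/2 + n*π := by ring
      rw [harg, Real.sin_add_nat_mul_pi]
    rw [hg]
    simp only []
    rw [hfper, hsper]
    ring
  -- continuity
  have hcontf : Continuous f := by
    rw [hf]
    exact continuous_finset_prod _ (fun i _ => Real.continuous_sin.comp (by fun_prop))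
  have hcontg : Continuous g := by
    rw [hg]
    exact ((continuous_const.mul hcontf)).sub
      (continuous_const.mul (Real.continuous_sin.comp (by fun_prop)))
  -- roots of g between consecutive s j
  have hroot : ∀ j : ℕ, ∃ r : ℝ, 1 ≤ j → j ≤ n →
      (r ∈ Set.Ioo (s j) (if j = n then s 1 + 2*π else s (j+1)) ∧ g r = 0) := by
    intro j
    by_cases hj : 1 ≤ j ∧ j ≤ n
    · obtain ⟨h1, h2⟩ := hj
      by_cases hjn : j = n
      · have hgn : 0 < g (s j) := by
          have hx := hgsign j h1 h2
          rw [hjn] at hx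
          rw [Nat.sub_self, pow_zero, one_mul] at hx
          rw [hjn]
          exact hx
        have hgn2 : g (s 1 + 2*π) < 0 := by
          rw [hper]
          have hx := hgsign 1 le_rfl hn
          have hy : (-1:ℝ)^n * g (s 1) = -((-1:ℝ)^(n-1) * g (s 1)) := by
            conv_lhs => rw [show n = (n-1)+1 from by omega, pow_succ]
            ring
          rw [hy]
          linarith
        have hab : s j < s 1 + 2*π := by
          have ha := (hslb j h1 h2).2
          have hb := (hslb 1 le_rfl hn).1
          have heq : t (j+1) = t 1 + 2*π := by rw [hjn]; exact hwrap
          linarith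
        obtain ⟨r, hr1, hr2⟩ := exists_zero_between hcontg hab (mul_neg_of_pos_of_neg hgn hgn2)
        refine ⟨r, fun _ _ => ⟨?_, hr2⟩⟩
        rw [if_pos hjn]
        exact hr1
      · have h2' : j + 1 ≤ n := by omega
        have hgj : 0 < (-1:ℝ)^(n-j) * g (s j) := hgsign j h1 h2
        have hgj1 : 0 < (-1:ℝ)^(n-(j+1)) * g (s (j+1)) := hgsign (j+1) (by omega) h2'
        have hkey : g (s j) * g (s (j+1)) < 0 := by
          have hprod : ((-1:ℝ)^(n-j) * g (s j)) * ((-1:ℝ)^(n-(j+1)) * g (s (j+1)))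
              = -(g (s j) * g (s (j+1))) := by
            rw [show n - j = (n-(j+1))+1 from by omega, pow_succ,
              show ∀ a b c d : ℝ, (a * b) * c * (a * d) = (a*a) * (b * (c * d))
                from fun a b c d => by ring,
              ← pow_add, ← two_mul, pow_mul, neg_one_sq, one_pow]
            ring
          nlinarith
        have hab : s j < s (j+1) := hsmono j (j+1) h1 (Nat.lt_succ_self j) h2'
        obtain ⟨r, hr1, hr2⟩ := exists_zero_between hcontg hab hkey
        refine ⟨r, fun _ _ => ⟨?_, hr2⟩⟩
        rw [if_neg hjn]
        exact hr1
    · exact ⟨0, fun ha hb => absurd ⟨ha, hb⟩ hj⟩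
  choose r hr using hroot
  -- bounds on r
  have hrlow : ∀ j, 1 ≤ j → j ≤ n → s j < r j := fun j h1 h2 => (hr j h1 h2).1.1
  have hrhi : ∀ j, 1 ≤ j → j ≤ n → r j < s 1 + 2*π := by
    intro j h1 h2
    by_cases hjn : j = n
    · have hx := (hr j h1 h2).1.2
      rw [if_pos hjn] at hx
      exact hx
    · have h2' : j + 1 ≤ n := by omega
      have hx := (hr j h1 h2).1.2
      rw [if_neg hjn] at hx
      have hy := (hslb (j+1) (by omega) h2').2
      have hz := hupper (j+1) (by omega) h2'
      have hw1 := (hslb 1 le_rfl hn).1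
      linarith
  have hrnext : ∀ j, 1 ≤ j → j + 1 ≤ n → r j < s (j+1) := by
    intro j h1 h2
    have hx := (hr j h1 (by omega)).1.2
    rw [if_neg (by omega : j ≠ n)] at hx
    exact hx
  have hrmono : ∀ j k, 1 ≤ j → j < k → k ≤ n → r j < r k := by
    intro j k h1 h2 h3
    have ha := hrnext j h1 (by omega)
    have hb : s (j+1) ≤ s k := by
      rcases eq_or_lt_of_le (show j + 1 ≤ k from h2) with h | h
      · rw [h]
      · exact le_of_lt (hsmono (j+1) k (by omega) h h3)
    have hc := hrlow k (by omega) h3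
    linarith
  have hrlow1 : ∀ j, 1 ≤ j → j ≤ n → s 1 < r j := by
    intro j h1 h2
    rcases eq_or_lt_of_le h1 with h | h
    · rw [← h]; exact hrlow 1 le_rfl hn
    · have := hsmono 1 j le_rfl h h2
      have := hrlow j h1 h2
      linarith
  -- injectivity of exp(r j * I)
  have hinj : ∀ a b, 1 ≤ a → a < b → b ≤ n →
      Complex.exp ((r a : ℂ) * Complex.I) ≠ Complex.exp ((r b : ℂ) * Complex.I) := by
    intro a b ha hab hb heq
    have hdiv : Complex.exp (((r a - r b : ℝ) : ℂ) * Complex.I) = 1 := by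
      rw [Complex.ofReal_sub, sub_mul, Complex.exp_sub, heq, div_self (Complex.exp_ne_zero _)]
    rw [Complex.exp_eq_one_iff] at hdiv
    obtain ⟨m, hm⟩ := hdiv
    have hm2 : ((r a - r b : ℝ) : ℂ) = (m : ℂ) * (2*(π:ℂ)) :=
      mul_right_cancel₀ Complex.I_ne_zero (by rw [hm]; ring)
    have hm3 : r a - r b = (m : ℝ) * (2*π) := by exact_mod_cast hm2
    have hx1 := hrlow1 a ha (by omega)
    have hx2 := hrlow1 b (by omega) hb
    have hy1 := hrhi a ha (by omega)
    have hy2 := hrhi b (by omega) hb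
    have hz := hrmono a b ha hab hb
    have hpi := Real.pi_pos
    have hm4 : (0:ℤ) ≤ m ∨ m ≤ -1 := by omega
    rcases hm4 with h | h
    · have : (0:ℝ) ≤ (m : ℝ) := by exact_mod_cast h
      nlinarith
    · have : (m : ℝ) ≤ -1 := by exact_mod_cast h
      nlinarith
  -- the polynomial argument
  set M : Polynomial ℂ := ∏ j ∈ Finset.Icc 1 n,
    (Polynomial.X - Polynomial.C (Complex.exp ((t j : ℂ) * Complex.I))) with hM
  set Q : Polynomial ℂ := M - Polynomial.X^n + Polynomial.C w with hQdef
  have hMmonic : M.Monic :=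
    Polynomial.monic_prod_of_monic _ _ (fun j _ => Polynomial.monic_X_sub_C _)
  have hMdeg : M.natDegree = n := by
    rw [hM, Polynomial.natDegree_prod_of_monic _ _ (fun j _ => Polynomial.monic_X_sub_C _)]
    simp
  have hQdeg : Q.degree < (n : WithBot ℕ) := by
    have hd1 : (M - Polynomial.X^n).degree < (n : WithBot ℕ) := by
      have hdM : M.degree = (n : WithBot ℕ) := by
        rw [Polynomial.degree_eq_natDegree hMmonic.ne_zero, hMdeg]
      have hdX : (Polynomial.X ^ n : Polynomial ℂ).degree = (n : WithBot ℕ) :=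
        Polynomial.degree_X_pow n
      have hlc : M.leadingCoeff = (Polynomial.X ^ n : Polynomial ℂ).leadingCoeff := by
        rw [hMmonic.leadingCoeff, Polynomial.leadingCoeff_X_pow]
      have hsub := Polynomial.degree_sub_lt (hdM.trans hdX.symm) hMmonic.ne_zero hlc
      rw [hdM] at hsub
      exact hsub
    have hd2 : (Polynomial.C w).degree < (n : WithBot ℕ) :=
      lt_of_le_of_lt Polynomial.degree_C_le (by exact_mod_cast (show (0:ℕ) < n by omega))
    calc Q.degree ≤ max (M - Polynomial.X^n).degree (Polynomial.C w).degree :=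
        Polynomial.degree_add_le _ _
      _ < (n : WithBot ℕ) := max_lt hd1 hd2
  have hQnat : Q.natDegree < n := by
    by_cases hQ0 : Q = 0
    · rw [hQ0]
      simpa using (show 0 < n by omega)
    · exact (Polynomial.natDegree_lt_iff_degree_lt hQ0).mpr hQdeg
  have hQeval : ∀ j, 1 ≤ j → j ≤ n → Q.eval (Complex.exp ((r j : ℝ) * Complex.I)) = 0 := by
    intro j h1 h2
    have hg0 := (hr j h1 h2).2
    have hPeq := hgzero (r j) hg0
    rw [hQdef, hM]
    simp only [Polynomial.eval_add, Polynomial.eval_sub, Polynomial.eval_pow, Polynomial.eval_X,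
      Polynomial.eval_C, Polynomial.eval_prod]
    have hprod : ∏ k ∈ Finset.Icc 1 n,
        (Complex.exp ((r j : ℂ)*Complex.I) - Complex.exp ((t k : ℂ)*Complex.I))
        = P (Complex.exp ((r j : ℂ)*Complex.I)) := by rw [hP]
    rw [hprod, hPeq]
    have hxp : Complex.exp ((r j : ℂ)*Complex.I)^n
        = Complex.exp (((n * r j : ℝ) : ℂ)*Complex.I) := by
      rw [← Complex.exp_nat_mul]
      push_cast
      ring_nf
    rw [hxp]
    ring
  have hcard : ((Finset.Icc 1 n).image (fun j => Complex.exp ((r j : ℝ) * Complex.I))).card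
      = n := by
    rw [Finset.card_image_of_injOn, Nat.card_Icc]
    · omega
    · intro a ha b hb hab
      simp only [Finset.coe_Icc, Set.mem_Icc] at ha hb
      by_contra hne
      rcases Nat.lt_or_ge a b with h | h
      · exact hinj a b ha.1 h hb.2 hab
      · exact hinj b a hb.1 (by omega) ha.2 hab.symm
  have hQ0 : Q = 0 := by
    apply Polynomial.eq_zero_of_natDegree_lt_card_of_eval_eq_zero' Q
      ((Finset.Icc 1 n).image (fun j => Complex.exp ((r j : ℝ) * Complex.I)))
    · intro z hz
      obtain ⟨j, hj, rfl⟩ := Finset.mem_image.mp hz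
      obtain ⟨h1, h2⟩ := Finset.mem_Icc.mp hj
      exact hQeval j h1 h2
    · rw [hcard]
      exact hQnat
  -- final contradiction
  have hPz : P (Complex.exp ((s 1 : ℝ) * Complex.I)) =
      (Complex.exp ((s 1 : ℝ) * Complex.I))^n - w := by
    have := congrArg (Polynomial.eval (Complex.exp ((s 1 : ℝ) * Complex.I))) hQ0
    rw [hQdef, hM] at this
    simp only [Polynomial.eval_add, Polynomial.eval_sub, Polynomial.eval_pow, Polynomial.eval_X,
      Polynomial.eval_C, Polynomial.eval_prod, Polynomial.eval_zero] at this
    have hprod : ∏ k ∈ Finset.Icc 1 n,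
        (Complex.exp ((s 1 : ℂ)*Complex.I) - Complex.exp ((t k : ℂ)*Complex.I))
        = P (Complex.exp ((s 1 : ℂ)*Complex.I)) := by rw [hP]
    rw [hprod] at this
    linear_combination this
  have hgt := (hs 1 (Finset.mem_Icc.mpr ⟨le_rfl, hn⟩)).2
  rw [hPz] at hgt
  have hb1 : ‖(Complex.exp ((s 1 : ℝ) * Complex.I))^n - w‖ ≤ 2 := by
    calc ‖(Complex.exp ((s 1 : ℝ) * Complex.I))^n - w‖
        ≤ ‖(Complex.exp ((s 1 : ℝ) * Complex.I))^n‖ + ‖w‖ := by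
          exact norm_sub_le _ _
      _ = 1 + 1 := by
          rw [norm_pow, Complex.norm_exp_ofReal_mul_I, one_pow, hw,
            Complex.norm_exp_ofReal_mul_I]
      _ = 2 := by norm_num
  linarith
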